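/- Let f : ℝⁿ → ℝ be convex with an L-Lipschitz continuous gradient, let X ⊆ ℝⁿ be closed convex, and suppose a minimizer x* of f over X exists. Then the projected gradient iterates x^{k+1} = Π_X(x^k − α∇f(x^k)) with fixed stepsize α ∈ (0, 1/L] satisfy f(x^k) − f(x*) = O(1/k); more precisely f(x^k) − f(x*) ≤ ‖x⁰ − x*‖²/(2αk) for all k ≥ 1. -/

import Mathlib

open RealInnerProductSpace

section Helpers

variable {E : Type*} [NormedAddCommGroup E] [InnerProductSpace ℝ E] [CompleteSpace E]

lemma pg_line_deriv (f : E → ℝ) (g : E) (p d : E) (t : ℝ)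
    (hf : HasGradientAt f g (p + t • d)) :
    HasDerivAt (fun s : ℝ => f (p + s • d)) ⟪g, d⟫ t := by
  have h1 : HasDerivAt (fun s : ℝ => p + s • d) d t := by
    simpa using ((hasDerivAt_id t).smul_const d).const_add p
  have h2 := (hasGradientAt_iff_hasFDerivAt.mp hf).comp_hasDerivAt t h1
  exact h2

lemma pg_convex_lower (f : E → ℝ) (hconv : ConvexOn ℝ Set.univ f)
    (g : E) (x y : E) (hg : HasGradientAt f g x) :
    f x + ⟪g, y - x⟫ ≤ f y := by
  set ψ : ℝ → ℝ := fun t => f (x + t • (y - x)) with hψ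
  have hψconv : ConvexOn ℝ Set.univ ψ := by
    have := hconv.comp_affineMap (AffineMap.lineMap x y : ℝ →ᵃ[ℝ] E)
    simp only [Set.preimage_univ] at this
    refine (Eq.symm (?_ : ψ = f ∘ AffineMap.lineMap x y)) ▸ this
    funext t
    show f (x + t • (y - x)) = f (AffineMap.lineMap x y t)
    congr 1
    rw [AffineMap.lineMap_apply_module]
    module
  have hd : HasDerivAt ψ ⟪g, y - x⟫ 0 := by
    exact pg_line_deriv f g x (y - x) 0 (by simpa using hg)
  have hs := hψconv.le_slope_of_hasDerivAt (Set.mem_univ 0) (Set.mem_univ 1) one_pos hd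
  have h1 : ψ 1 = f y := by simp [hψ]
  have h0 : ψ 0 = f x := by simp [hψ]
  rw [slope_def_field] at hs
  simp [h0, h1] at hs
  linarith

lemma pg_descent (f : E → ℝ) (f' : E → E) (L : ℝ)
    (hgrad : ∀ z, HasGradientAt f (f' z) z)
    (hlip : ∀ z w, ‖f' z - f' w‖ ≤ L * ‖z - w‖) (x y : E) :
    f y ≤ f x + ⟪f' x, y - x⟫ + L / 2 * ‖y - x‖ ^ 2 := by
  set d := y - x with hd
  set c := ⟪f' x, d⟫ with hc
  set q := ‖d‖ ^ 2 with hq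
  set h : ℝ → ℝ := fun t => f (x + t • d) - t * c - L / 2 * q * t ^ 2 with hh
  have hder : ∀ t : ℝ, HasDerivAt h (⟪f' (x + t • d), d⟫ - c - L * t * q) t := by
    intro t
    have h1 := pg_line_deriv f (f' (x + t • d)) x d t (hgrad _)
    have h2 : HasDerivAt (fun t : ℝ => t * c) c t := by
      simpa using (hasDerivAt_id t).mul_const c
    have h3 : HasDerivAt (fun t : ℝ => L / 2 * q * t ^ 2) (L / 2 * q * (2 * t)) t := by
      simpa using (hasDerivAt_pow 2 t).const_mul (L / 2 * q)
    have := (h1.sub h2).sub h3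
    refine this.congr_deriv ?_
    ring
  have hdiff : Differentiable ℝ h := fun t => (hder t).differentiableAt
  have hmono : AntitoneOn h (Set.Icc (0:ℝ) 1) := by
    apply antitoneOn_of_deriv_nonpos (convex_Icc 0 1) hdiff.continuous.continuousOn
      hdiff.differentiableOn
    intro t ht
    rw [interior_Icc] at ht
    rw [(hder t).deriv]
    have hle : ⟪f' (x + t • d) - f' x, d⟫ ≤ L * t * q := by
      calc ⟪f' (x + t • d) - f' x, d⟫ ≤ ‖f' (x + t • d) - f' x‖ * ‖d‖ :=
            real_inner_le_norm _ _
        _ ≤ (L * ‖(x + t • d) - x‖) * ‖d‖ := by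
            apply mul_le_mul_of_nonneg_right (hlip _ _) (norm_nonneg _)
        _ = L * t * q := by
            have : (x + t • d) - x = t • d := by abel
            rw [this, norm_smul, Real.norm_eq_abs, abs_of_pos ht.1, hq]
            ring
    rw [inner_sub_left] at hle
    linarith
  have hfinal := hmono (Set.left_mem_Icc.mpr zero_le_one) (Set.right_mem_Icc.mpr zero_le_one)
    zero_le_one
  have h1 : h 1 = f y - c - L / 2 * q := by simp [hh, hd]
  have h0 : h 0 = f x := by simp [hh]
  rw [h1, h0] at hfinal
  have hceq : c = ⟪f' x, y - x⟫ := by rw [hc, hd]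
  have hqeq : q = ‖y - x‖ ^ 2 := by rw [hq, hd]
  linarith [hfinal, hceq.le, hceq.ge, hqeq.le, hqeq.ge]

lemma pg_proj_vi (K : Set E) (hK : Convex ℝ K) (u v : E) (hv : v ∈ K)
    (hmin : ∀ w ∈ K, ‖u - v‖ ≤ ‖u - w‖) : ∀ w ∈ K, ⟪u - v, w - v⟫ ≤ 0 := by
  have : Nonempty K := ⟨⟨v, hv⟩⟩
  have hbdd : BddBelow (Set.range fun w : K => ‖u - (w : E)‖) := by
    refine ⟨0, ?_⟩
    rintro _ ⟨w, rfl⟩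
    exact norm_nonneg _
  have heq : ‖u - v‖ = ⨅ w : K, ‖u - (w : E)‖ :=
    le_antisymm (le_ciInf fun w => hmin w w.2) (ciInf_le hbdd ⟨v, hv⟩)
  exact (norm_eq_iInf_iff_real_inner_le_zero hK hv).mp heq

end Helpers

/-- Projected gradient method: for convex `f` with `L`-Lipschitz gradient, a closed
convex set `X`, a minimizer `x*` of `f` over `X`, and fixed stepsize `α ∈ (0, 1/L]`,
the iterates `x^{k+1} = Π_X(x^k − α ∇f(x^k))` satisfy
`f(x^k) − f(x*) ≤ ‖x⁰ − x*‖²/(2αk)` for all `k ≥ 1`. -/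
theorem projected_gradient_rate (n : ℕ) (f : EuclideanSpace ℝ (Fin n) → ℝ)
    (f' : EuclideanSpace ℝ (Fin n) → EuclideanSpace ℝ (Fin n))
    (L : ℝ) (hL : 0 < L)
    (hconv : ConvexOn ℝ Set.univ f)
    (hgrad : ∀ z, HasGradientAt f (f' z) z)
    (hlip : ∀ z w, ‖f' z - f' w‖ ≤ L * ‖z - w‖)
    (X : Set (EuclideanSpace ℝ (Fin n))) (hXc : IsClosed X) (hXconv : Convex ℝ X)
    (xstar : EuclideanSpace ℝ (Fin n)) (hxstar : xstar ∈ X)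
    (hmin : ∀ z ∈ X, f xstar ≤ f z)
    (α : ℝ) (hα0 : 0 < α) (hαL : α ≤ 1/L)
    (x : ℕ → EuclideanSpace ℝ (Fin n)) (hx0 : x 0 ∈ X)
    (hiter : ∀ k, x (k+1) ∈ X ∧
      ∀ z ∈ X, ‖x k - α • f' (x k) - x (k+1)‖ ≤ ‖x k - α • f' (x k) - z‖) :
    ∀ k : ℕ, 1 ≤ k → f (x k) - f xstar ≤ ‖x 0 - xstar‖^2 / (2 * α * k) := by
  have hαL' : α * L ≤ 1 := by
    calc α * L ≤ (1 / L) * L := by nlinarith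
      _ = 1 := by field_simp
  have memX : ∀ k, x k ∈ X := by
    intro k
    induction k with
    | zero => exact hx0
    | succ k _ => exact (hiter k).1
  -- main per-step estimate
  have step : ∀ k, ∀ z ∈ X,
      2 * α * (f (x (k+1)) - f z) ≤ ‖x k - z‖ ^ 2 - ‖x (k+1) - z‖ ^ 2 := by
    intro k z hz
    set a := x k with ha
    set b := x (k+1) with hb
    set g := f' a with hg
    have hdesc : f b ≤ f a + ⟪g, b - a⟫ + L / 2 * ‖b - a‖ ^ 2 :=
      pg_descent f f' L hgrad hlip a b
    have hconvz : f a + ⟪g, z - a⟫ ≤ f z :=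
      pg_convex_lower f hconv g a z (hgrad a)
    have hproj : ⟪(a - α • g) - b, z - b⟫ ≤ 0 :=
      pg_proj_vi X hXconv (a - α • g) b (hiter k).1 (hiter k).2 z hz
    have e1 : ⟪(a - α • g) - b, z - b⟫ = ⟪a - b, z - b⟫ - α * ⟪g, z - b⟫ := by
      rw [show (a - α • g) - b = (a - b) - α • g by abel, inner_sub_left,
        real_inner_smul_left]
    have e2 : ⟪a - b, z - b⟫ = -⟪a - b, b - z⟫ := by
      rw [show z - b = -(b - z) by abel, inner_neg_right]
    have e3 : ⟪g, z - b⟫ = -⟪g, b - z⟫ := by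
      rw [show z - b = -(b - z) by abel, inner_neg_right]
    have hp : α * ⟪g, b - z⟫ ≤ ⟪a - b, b - z⟫ := by
      rw [e1, e2, e3] at hproj; linarith
    have i1 : ⟪g, b - a⟫ = ⟪g, b - z⟫ + ⟪g, z - a⟫ := by
      rw [show b - a = (b - z) + (z - a) by abel, inner_add_right]
    have hid : ‖a - z‖ ^ 2 = ‖a - b‖ ^ 2 + 2 * ⟪a - b, b - z⟫ + ‖b - z‖ ^ 2 := by
      rw [show a - z = (a - b) + (b - z) by abel, norm_add_sq_real]
    have hnn : ‖b - a‖ = ‖a - b‖ := norm_sub_rev _ _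
    have hq : L * ‖a - b‖ ^ 2 * α ≤ ‖a - b‖ ^ 2 := by nlinarith [sq_nonneg ‖a - b‖]
    -- combine: f b - f z ≤ ⟪g, b - z⟫ + L/2 ‖a-b‖²
    have hc1 : f b - f z ≤ ⟪g, b - z⟫ + L / 2 * ‖a - b‖ ^ 2 := by
      rw [hnn] at hdesc; linarith [hdesc, hconvz, i1.le, i1.ge]
    nlinarith [mul_le_mul_of_nonneg_left hc1 (by linarith : (0:ℝ) ≤ 2 * α), hp, hid, hq, hα0]
  have hmono : ∀ k, f (x (k+1)) ≤ f (x k) := by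
    intro k
    have h := step k (x k) (memX k)
    simp only [sub_self, norm_zero] at h
    nlinarith [sq_nonneg ‖x (k+1) - x k‖, hα0]
  have key : ∀ k : ℕ, 2 * α * ((k : ℝ) * (f (x k) - f xstar)) ≤
      ‖x 0 - xstar‖ ^ 2 - ‖x k - xstar‖ ^ 2 := by
    intro k
    induction k with
    | zero => simp
    | succ k ih =>
      have hstep := step k xstar hxstar
      have h1 : 2 * α * ((k : ℝ) * (f (x (k+1)) - f xstar)) ≤
          2 * α * ((k : ℝ) * (f (x k) - f xstar)) := by
        apply mul_le_mul_of_nonneg_left _ (by linarith : (0:ℝ) ≤ 2 * α)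
        apply mul_le_mul_of_nonneg_left _ (Nat.cast_nonneg k)
        linarith [hmono k]
      push_cast
      nlinarith [ih, hstep, h1]
  intro k hk
  have hkpos : (1 : ℝ) ≤ (k : ℝ) := by exact_mod_cast hk
  have hden : 0 < 2 * α * (k : ℝ) := by positivity
  rw [le_div_iff₀ hden]
  nlinarith [key k, sq_nonneg ‖x k - xstar‖]
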